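/- arXiv:1408.1336 — 5 statements merged into one kernel-verified Lean document; each statement's English description precedes it below -/
import Mathlib

section
/- (Binary C-bound) Let D be a probability distribution on X × {−1,+1}, H a set of voters h : X → [−1,+1], and ρ a probability distribution on H. Define the margin M_ρ(x,y) = y · E_{h∼ρ}[h(x)] and the majority vote B_ρ(x) = sign(E_{h∼ρ}[h(x)]). If E_{(x,y)∼D}[M_ρ(x,y)] > 0, then the risk R_D(B_ρ) = P_{(x,y)∼D}(B_ρ(x) ≠ y) satisfies R_D(B_ρ) ≤ 1 − (E_{(x,y)∼D}[M_ρ(x,y)])² / E_{(x,y)∼D}[(M_ρ(x,y))²], provided that on the event of ties (E_{h∼ρ}h(x)=0) the majority vote is counted as an error. -/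
open MeasureTheory

lemma sign_ne_one_iff' (x : ℝ) : Real.sign x ≠ 1 ↔ x ≤ 0 := by
  rcases lt_trichotomy x 0 with hx | hx | hx
  · simp [Real.sign_of_neg hx, hx.le]; norm_num
  · simp [hx]
  · simp [Real.sign_of_pos hx, not_le.mpr hx]

lemma sign_ne_neg_one_iff' (x : ℝ) : Real.sign x ≠ -1 ↔ 0 ≤ x := by
  rcases lt_trichotomy x 0 with hx | hx | hx
  · simp [Real.sign_of_neg hx, not_le.mpr hx]
  · simp [hx]
  · simp [Real.sign_of_pos hx, hx.le]; norm_num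

/-- Binary C-bound. -/
theorem binary_c_bound {X H : Type*} [MeasurableSpace X] [MeasurableSpace H]
    (D : Measure (X × ℝ)) [IsProbabilityMeasure D]
    (ρ : Measure H) [IsProbabilityMeasure ρ]
    (h : H → X → ℝ) (hbound : ∀ θ x, |h θ x| ≤ 1)
    (hint : ∀ x, Integrable (fun θ => h θ x) ρ)
    (hlab : ∀ᵐ p ∂D, p.2 = 1 ∨ p.2 = -1)
    (hM : MemLp (fun p : X × ℝ => p.2 * ∫ θ, h θ p.1 ∂ρ) 2 D)
    (hpos : 0 < ∫ p, p.2 * (∫ θ, h θ p.1 ∂ρ) ∂D) :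
    (D {p : X × ℝ | Real.sign (∫ θ, h θ p.1 ∂ρ) ≠ p.2}).toReal ≤
      1 - (∫ p, p.2 * (∫ θ, h θ p.1 ∂ρ) ∂D) ^ 2 /
            ∫ p, (p.2 * (∫ θ, h θ p.1 ∂ρ)) ^ 2 ∂D := by
  classical
  set f : X → ℝ := fun x => ∫ θ, h θ x ∂ρ with hfdef
  set M : X × ℝ → ℝ := fun p => p.2 * f p.1 with hMdef
  have hMsm : AEStronglyMeasurable M D := hM.aestronglyMeasurable
  set M' : X × ℝ → ℝ := hMsm.mk M with hM'def
  have hae : M =ᵐ[D] M' := hMsm.ae_eq_mk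
  have hM' : MemLp M' 2 D := hM.ae_eq hae
  have hM'meas : StronglyMeasurable M' := hMsm.stronglyMeasurable_mk
  set A : Set (X × ℝ) := {p | 0 < M' p} with hAdef
  have hAmeas : MeasurableSet A :=
    measurableSet_lt measurable_const hM'meas.measurable
  -- the error set has the same measure as Aᶜ
  have hE : D {p : X × ℝ | Real.sign (f p.1) ≠ p.2} = D Aᶜ := by
    apply measure_congr
    rw [Filter.eventuallyEq_set]
    filter_upwards [hlab, hae] with p hp hp'
    simp only [Set.mem_setOf_eq, Set.mem_compl_iff, hAdef, not_lt, ← hp', hMdef]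
    rcases hp with h1 | h1
    · rw [h1, one_mul]; exact sign_ne_one_iff' (f p.1)
    · rw [h1]
      constructor
      · intro hs
        have := (sign_ne_neg_one_iff' (f p.1)).mp hs
        nlinarith
      · intro hs
        have : 0 ≤ f p.1 := by nlinarith
        exact (sign_ne_neg_one_iff' (f p.1)).mpr this
  -- positive part
  set g : X × ℝ → ℝ := fun p => max (M' p) 0 with hgdef
  have hgsm : StronglyMeasurable g := hM'meas.sup stronglyMeasurable_const
  have hg2 : MemLp g 2 D := by
    refine hM'.of_le hgsm.aestronglyMeasurable (Filter.Eventually.of_forall fun p => ?_)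
    simp only [Real.norm_eq_abs, hgdef]
    rw [abs_of_nonneg (le_max_right _ _)]
    exact max_le (le_abs_self _) (abs_nonneg _)
  have hind : MemLp (A.indicator (fun _ => (1 : ℝ))) 2 D :=
    memLp_indicator_const 2 hAmeas 1 (Or.inr (measure_ne_top D A))
  -- notations
  set I1 : ℝ := ∫ p, M p ∂D with hI1def
  set a : ℝ := ∫ p, M' p ^ 2 ∂D with hadef
  set t : ℝ := (D A).toReal with htdef
  have ht0 : 0 ≤ t := ENNReal.toReal_nonneg
  have ht1 : t ≤ 1 := by
    rw [htdef]
    exact ENNReal.toReal_le_of_le_ofReal zero_le_one (by simpa using prob_le_one (μ := D) (s := A))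
  have ha0 : 0 ≤ a := integral_nonneg fun p => sq_nonneg _
  -- step 1 : I1 ≤ ∫ g
  have step1 : I1 ≤ ∫ p, g p ∂D := by
    rw [hI1def, integral_congr_ae hae]
    exact integral_mono (hM'.integrable one_le_two) (hg2.integrable one_le_two)
      fun p => le_max_left _ _
  -- step 2 : Cauchy-Schwarz
  have h2 : ENNReal.ofReal (2 : ℝ) = 2 := by norm_num
  have hpq : (2 : ℝ).HolderConjugate 2 := (Real.holderConjugate_iff_eq_conjExponent one_lt_two).mpr (by norm_num)
  have hCS := integral_mul_le_Lp_mul_Lq_of_nonneg (μ := D) hpq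
    (Filter.Eventually.of_forall fun p => le_max_right _ _)
    (Filter.Eventually.of_forall fun p => Set.indicator_nonneg (fun _ _ => zero_le_one) p)
    (h2 ▸ hg2) (h2 ▸ hind)
  have hprod : ∀ p, g p * A.indicator (fun _ => (1 : ℝ)) p = g p := by
    intro p
    by_cases hp : p ∈ A
    · simp [Set.indicator_of_mem hp]
    · simp [Set.indicator_of_notMem hp, hgdef, max_eq_right (not_lt.mp (by simpa [hAdef] using hp))]
  have hgsq : ∫ p, g p ^ (2 : ℝ) ∂D ≤ a := by
    have : ∫ p, g p ^ (2 : ℝ) ∂D = ∫ p, g p ^ 2 ∂D := by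
      exact integral_congr_ae (Filter.Eventually.of_forall fun p => Real.rpow_two (g p))
    rw [this, hadef]
    refine integral_mono hg2.integrable_sq hM'.integrable_sq fun p => ?_
    have habs : |g p| ≤ |M' p| := by
      simp only [hgdef]
      rw [abs_of_nonneg (le_max_right _ _)]
      exact max_le (le_abs_self _) (abs_nonneg _)
    calc g p ^ 2 = |g p| ^ 2 := (sq_abs _).symm
      _ ≤ |M' p| ^ 2 := by gcongr
      _ = M' p ^ 2 := sq_abs _
  have hindsq : ∫ p, A.indicator (fun _ => (1 : ℝ)) p ^ (2 : ℝ) ∂D = t := by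
    have : ∀ p, A.indicator (fun _ => (1 : ℝ)) p ^ (2 : ℝ)
        = A.indicator (fun _ => (1 : ℝ)) p := by
      intro p
      by_cases hp : p ∈ A
      · simp [Set.indicator_of_mem hp]
      · simp [Set.indicator_of_notMem hp, Real.zero_rpow two_ne_zero]
    rw [integral_congr_ae (Filter.Eventually.of_forall this), integral_indicator_const _ hAmeas]
    simp [htdef, measureReal_def]
  -- combine
  have key : I1 ≤ a ^ ((1 : ℝ) / 2) * t ^ ((1 : ℝ) / 2) := by
    refine step1.trans ?_
    have : ∫ p, g p ∂D = ∫ p, g p * A.indicator (fun _ => (1 : ℝ)) p ∂D :=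
      integral_congr_ae (Filter.Eventually.of_forall fun p => (hprod p).symm)
    rw [this]
    refine hCS.trans ?_
    rw [hindsq]
    have hleft : (∫ p, g p ^ (2 : ℝ) ∂D) ^ ((1 : ℝ) / 2) ≤ a ^ ((1 : ℝ) / 2) :=
      Real.rpow_le_rpow (integral_nonneg fun p => Real.rpow_nonneg (le_max_right _ _) _)
        hgsq (by norm_num)
    exact mul_le_mul_of_nonneg_right hleft (Real.rpow_nonneg ht0 _)
  have ha2 : (a ^ ((1 : ℝ) / 2)) ^ 2 = a := by
    rw [← Real.rpow_natCast (a ^ ((1 : ℝ) / 2)) 2, ← Real.rpow_mul ha0]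
    norm_num
  have ht2 : (t ^ ((1 : ℝ) / 2)) ^ 2 = t := by
    rw [← Real.rpow_natCast (t ^ ((1 : ℝ) / 2)) 2, ← Real.rpow_mul ht0]
    norm_num
  have hsq : I1 ^ 2 ≤ a * t := by
    calc I1 ^ 2 ≤ (a ^ ((1 : ℝ) / 2) * t ^ ((1 : ℝ) / 2)) ^ 2 := by
          have h0 : (0 : ℝ) ≤ I1 := hpos.le
          exact pow_le_pow_left₀ h0 key 2
      _ = a * t := by rw [mul_pow, ha2, ht2]
  have hI1pos : 0 < I1 := hpos
  have hapos : 0 < a := by nlinarith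
  -- identify the goal integrals
  have hgoal2 : ∫ p, (p.2 * f p.1) ^ 2 ∂D = a := by
    rw [hadef]
    refine integral_congr_ae ?_
    filter_upwards [hae] with p hp
    rw [← hp]
  have hcompl : (D Aᶜ).toReal = 1 - t := by
    rw [measure_compl hAmeas (measure_ne_top D A), measure_univ,
      ENNReal.toReal_sub_of_le (prob_le_one) ENNReal.one_ne_top, ENNReal.toReal_one, htdef]
  calc (D {p : X × ℝ | Real.sign (f p.1) ≠ p.2}).toReal
      = 1 - t := by rw [hE, hcompl]
    _ ≤ 1 - I1 ^ 2 / a := by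
        have : I1 ^ 2 / a ≤ t := (div_le_iff₀ hapos).mpr (by nlinarith)
        linarith
    _ = 1 - I1 ^ 2 / ∫ p, (p.2 * f p.1) ^ 2 ∂D := by rw [hgoal2]
end

section
/- (General C-bound) In the general structured output setting with margin M_ρ(x,y) = ⟨E_{h∼ρ}h(x), Y(y)⟩ − max_{c≠y}⟨E_{h∼ρ}h(x), Y(c)⟩, if E_{(x,y)∼D}[M_ρ(x,y)] > 0 then R_D(B_ρ) ≤ 1 − (E_{(x,y)∼D}[M_ρ(x,y)])² / E_{(x,y)∼D}[(M_ρ(x,y))²]. -/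
open MeasureTheory RealInnerProductSpace

/-- Second-moment (Cantelli-type) bound: if `f ∈ L²` has positive mean, then
`P(f ≤ 0) ≤ 1 - (E f)² / (E f²)`. -/
lemma cantelli_second_moment {α : Type*} [MeasurableSpace α] {ν : Measure α}
    [IsProbabilityMeasure ν] {f : α → ℝ} (hf : MemLp f 2 ν)
    (hpos : 0 < ∫ x, f x ∂ν) :
    (ν {x | f x ≤ 0}).toReal ≤ 1 - (∫ x, f x ∂ν) ^ 2 / ∫ x, f x ^ 2 ∂ν := by
  -- replace f by a strongly measurable representative f'
  set f' : α → ℝ := hf.1.mk f with hf'def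
  have hff' : f =ᵐ[ν] f' := hf.1.ae_eq_mk
  have hf'm : StronglyMeasurable f' := hf.1.stronglyMeasurable_mk
  have hf' : MemLp f' 2 ν := hf.ae_eq hff'
  have int_f' : Integrable f' ν := hf'.integrable one_le_two
  have hint : ∫ x, f x ∂ν = ∫ x, f' x ∂ν := integral_congr_ae hff'
  have hint2 : ∫ x, f x ^ 2 ∂ν = ∫ x, f' x ^ 2 ∂ν :=
    integral_congr_ae (hff'.mono fun x hx => by simp only [hx])
  have hmeas_le : ν {x | f x ≤ 0} ≤ ν {x | f' x ≤ 0} := by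
    refine measure_mono_ae ?_
    filter_upwards [hff'] with x hx hx0
    show f' x ≤ 0
    rw [← hx]
    exact hx0
  set A : Set α := {x | 0 < f' x} with hAdef
  have hA : MeasurableSet A := measurableSet_lt measurable_const hf'm.measurable
  have hcompl : {x | f' x ≤ 0} = Aᶜ := by
    ext x; simp [hAdef, not_lt]
  set a : ℝ := ∫ x, f x ∂ν with ha
  set b : ℝ := ∫ x, f x ^ 2 ∂ν with hb
  set s : ℝ := (ν A).toReal with hs
  have hs0 : 0 ≤ s := ENNReal.toReal_nonneg
  -- positive part
  set P : α → ℝ := fun x => max (f' x) 0 with hPdef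
  have hPmem : MemLp P 2 ν := hf'.pos_part
  have intP : Integrable P ν := hPmem.integrable one_le_two
  have intP2 : Integrable (fun x => P x ^ 2) ν := hPmem.integrable_sq
  have intf'2 : Integrable (fun x => f' x ^ 2) ν := hf'.integrable_sq
  -- indicator of A
  set I : α → ℝ := A.indicator (fun _ => (1 : ℝ)) with hIdef
  have hImem : MemLp I 2 ν := (memLp_const (1 : ℝ)).indicator hA
  have hI_int : ∫ x, I x ∂ν = s := by
    rw [hIdef, integral_indicator_const _ hA]; simp [hs, Measure.real]
  have hI_sq : ∫ x, I x ^ 2 ∂ν = s := by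
    rw [← hI_int]
    refine integral_congr_ae (Filter.Eventually.of_forall fun x => ?_)
    by_cases hx : x ∈ A <;> simp [hIdef, hx]
  -- Step 1 : a ≤ ∫ P
  have step1 : a ≤ ∫ x, P x ∂ν := by
    rw [hint]
    exact integral_mono int_f' intP fun x => le_max_left _ _
  -- Step 2 : ∫ P = ∫ P * I
  have step2 : ∫ x, P x ∂ν = ∫ x, P x * I x ∂ν := by
    refine integral_congr_ae (Filter.Eventually.of_forall fun x => ?_)
    by_cases hx : x ∈ A
    · simp [hIdef, hx]
    · have : f' x ≤ 0 := by simpa [hAdef, not_lt] using hx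
      simp [hIdef, hx, hPdef, max_eq_right this]
  -- Step 3 : Hölder (Cauchy–Schwarz)
  have hconj : Real.HolderConjugate 2 2 := Real.holderConjugate_iff.2 ⟨one_lt_two, by norm_num⟩
  have hofReal : ENNReal.ofReal (2 : ℝ) = 2 := by norm_num
  have step3 : ∫ x, P x * I x ∂ν ≤
      (∫ x, P x ^ 2 ∂ν) ^ ((1 : ℝ) / 2) * (∫ x, I x ^ 2 ∂ν) ^ ((1 : ℝ) / 2) := by
    have hPn : 0 ≤ᵐ[ν] P := Filter.Eventually.of_forall fun x => le_max_right _ _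
    have hIn : 0 ≤ᵐ[ν] I := Filter.Eventually.of_forall fun x =>
      Set.indicator_nonneg (fun _ _ => zero_le_one) x
    have := integral_mul_le_Lp_mul_Lq_of_nonneg hconj hPn hIn
      (by rwa [hofReal]) (by rwa [hofReal])
    simpa [Real.rpow_natCast] using this
  have hu0 : 0 ≤ ∫ x, P x ^ 2 ∂ν := integral_nonneg fun x => sq_nonneg _
  -- combine : a ≤ sqrt u * sqrt s
  have key : a ^ 2 ≤ b * s := by
    set u : ℝ := ∫ x, P x ^ 2 ∂ν with hu
    have hau : a ≤ u ^ ((1 : ℝ) / 2) * s ^ ((1 : ℝ) / 2) := by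
      calc a ≤ ∫ x, P x ∂ν := step1
        _ = ∫ x, P x * I x ∂ν := step2
        _ ≤ u ^ ((1 : ℝ) / 2) * s ^ ((1 : ℝ) / 2) := by rw [← hI_sq]; exact step3
    have hsq : (u ^ ((1 : ℝ) / 2) * s ^ ((1 : ℝ) / 2)) ^ 2 = u * s := by
      rw [mul_pow, ← Real.rpow_natCast (u ^ ((1:ℝ)/2)) 2,
        ← Real.rpow_natCast (s ^ ((1:ℝ)/2)) 2, ← Real.rpow_mul hu0, ← Real.rpow_mul hs0]
      norm_num
    have ha2 : a ^ 2 ≤ u * s := by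
      have h0 : 0 ≤ a := le_of_lt hpos
      calc a ^ 2 ≤ (u ^ ((1 : ℝ) / 2) * s ^ ((1 : ℝ) / 2)) ^ 2 :=
            pow_le_pow_left₀ h0 hau 2
        _ = u * s := hsq
    have hub : u ≤ b := by
      rw [hint2, hu]
      refine integral_mono intP2 intf'2 fun x => ?_
      by_cases hx : 0 ≤ f' x
      · simp [hPdef, max_eq_left hx]
      · push_neg at hx
        simp only [hPdef, max_eq_right hx.le]
        nlinarith [sq_nonneg (f' x)]
    exact ha2.trans (mul_le_mul_of_nonneg_right hub hs0)
  have hbpos : 0 < b := by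
    by_contra hble
    push_neg at hble
    have : b * s ≤ 0 := mul_nonpos_of_nonpos_of_nonneg hble hs0
    nlinarith [pow_pos hpos 2]
  -- measure of complement
  have hcomplement : (ν {x | f' x ≤ 0}).toReal = 1 - s := by
    rw [hcompl, prob_compl_eq_one_sub hA]
    rw [ENNReal.toReal_sub_of_le prob_le_one ENNReal.one_ne_top, ENNReal.toReal_one, hs]
  calc (ν {x | f x ≤ 0}).toReal ≤ (ν {x | f' x ≤ 0}).toReal :=
        ENNReal.toReal_mono (measure_ne_top _ _) hmeas_le
    _ = 1 - s := hcomplement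
    _ ≤ 1 - a ^ 2 / b := by
        have : a ^ 2 / b ≤ s := (div_le_iff₀ hbpos).2 (by linarith [key])
        linarith

/-- General C-bound for structured output majority votes. -/
theorem general_c_bound {X E Y : Type*} [MeasurableSpace X]
    [NormedAddCommGroup E] [InnerProductSpace ℝ E]
    [Fintype Y] [MeasurableSpace Y]
    (hcard : 1 < Fintype.card Y)
    (emb : Y → E) (hnorm : ∀ c : Y, ‖emb c‖ = 1)
    (g : X → E) (hg : ∀ x, g x ∈ convexHull ℝ (Set.range emb))
    (D : Measure (X × Y)) [IsProbabilityMeasure D]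
    (hM : MemLp (fun p : X × Y =>
        ⟪g p.1, emb p.2⟫ - (⨆ c : {c : Y // c ≠ p.2}, ⟪g p.1, emb c.1⟫)) 2 D)
    (hpos : 0 < ∫ p : X × Y,
        (⟪g p.1, emb p.2⟫ - (⨆ c : {c : Y // c ≠ p.2}, ⟪g p.1, emb c.1⟫)) ∂D) :
    (D {p : X × Y |
        ¬ ∀ c : Y, c ≠ p.2 → ‖emb p.2 - g p.1‖ ^ 2 < ‖emb c - g p.1‖ ^ 2}).toReal ≤
      1 - (∫ p : X × Y,
            (⟪g p.1, emb p.2⟫ - (⨆ c : {c : Y // c ≠ p.2}, ⟪g p.1, emb c.1⟫)) ∂D) ^ 2 /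
          ∫ p : X × Y,
            (⟪g p.1, emb p.2⟫ - (⨆ c : {c : Y // c ≠ p.2}, ⟪g p.1, emb c.1⟫)) ^ 2 ∂D := by
  set M : X × Y → ℝ := fun p =>
    ⟪g p.1, emb p.2⟫ - (⨆ c : {c : Y // c ≠ p.2}, ⟪g p.1, emb c.1⟫) with hMdef
  have hset : {p : X × Y |
      ¬ ∀ c : Y, c ≠ p.2 → ‖emb p.2 - g p.1‖ ^ 2 < ‖emb c - g p.1‖ ^ 2} =
      {p : X × Y | M p ≤ 0} := by
    ext ⟨x, y⟩
    have hne : Nonempty {c : Y // c ≠ y} := by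
      obtain ⟨c, hc⟩ := Fintype.exists_ne_of_one_lt_card hcard y
      exact ⟨⟨c, hc⟩⟩
    have hiff : ∀ c : Y, (‖emb y - g x‖ ^ 2 < ‖emb c - g x‖ ^ 2 ↔
        ⟪g x, emb c⟫ < ⟪g x, emb y⟫) := by
      intro c
      have h1 : ‖emb y - g x‖ ^ 2 = ‖emb y‖ ^ 2 - 2 * ⟪emb y, g x⟫ + ‖g x‖ ^ 2 :=
        norm_sub_sq_real _ _
      have h2 : ‖emb c - g x‖ ^ 2 = ‖emb c‖ ^ 2 - 2 * ⟪emb c, g x⟫ + ‖g x‖ ^ 2 :=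
        norm_sub_sq_real _ _
      rw [h1, h2, hnorm y, hnorm c, real_inner_comm (emb y) (g x),
        real_inner_comm (emb c) (g x)]
      constructor <;> intro h <;> nlinarith
    simp only [Set.mem_setOf_eq, not_forall, not_lt]
    constructor
    · rintro ⟨c, hc, hle⟩
      have hle' : ⟪g x, emb y⟫ ≤ ⟪g x, emb c⟫ := by
        by_contra hlt
        push_neg at hlt
        exact absurd ((hiff c).2 hlt) (not_lt.2 hle)
      have hsup : ⟪g x, emb c⟫ ≤ ⨆ c : {c : Y // c ≠ y}, ⟪g x, emb c.1⟫ :=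
        le_ciSup (f := fun c : {c : Y // c ≠ y} => ⟪g x, emb c.1⟫)
          (Set.Finite.bddAbove (Set.finite_range _)) ⟨c, hc⟩
      simp only [hMdef, sub_nonpos]
      exact hle'.trans hsup
    · intro hM0
      simp only [hMdef, sub_nonpos] at hM0
      obtain ⟨⟨c, hc⟩, hceq⟩ :=
        exists_eq_ciSup_of_finite (f := fun c : {c : Y // c ≠ y} => ⟪g x, emb c.1⟫)
      refine ⟨c, hc, ?_⟩
      have hle : ⟪g x, emb y⟫ ≤ ⟪g x, emb c⟫ := by rw [← hceq] at hM0; exact hM0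
      by_contra hlt
      push_neg at hlt
      exact absurd ((hiff c).1 hlt) (not_lt.2 hle)
  rw [hset]
  exact cantelli_second_moment hM hpos
end

section
/- (Multiclass 1/2-margin C-bound) In the multiclass setting, if E_{(x,y)∼D}[g_y(x) − 1/2] > 0, then R_D(B_ρ) ≤ 1 − (E_{(x,y)∼D}[g_y(x) − 1/2])² / E_{(x,y)∼D}[(g_y(x) − 1/2)²]. -/
open MeasureTheory

/-- Multiclass 1/2-margin C-bound. -/
theorem multiclass_half_margin_c_bound {X : Type*} [MeasurableSpace X] {Q : ℕ}
    (hQ : 2 ≤ Q)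
    (g : X → Fin Q → ℝ)
    (hsimplex : ∀ x, (∀ c, 0 ≤ g x c) ∧ (∑ c, g x c) = 1)
    (D : Measure (X × Fin Q)) [IsProbabilityMeasure D]
    (hM : MemLp (fun p : X × Fin Q => g p.1 p.2 - 1 / 2) 2 D)
    (hpos : 0 < ∫ p : X × Fin Q, (g p.1 p.2 - 1 / 2) ∂D) :
    (D {p : X × Fin Q | ¬ ∀ c : Fin Q, c ≠ p.2 → g p.1 c < g p.1 p.2}).toReal ≤
      1 - (∫ p : X × Fin Q, (g p.1 p.2 - 1 / 2) ∂D) ^ 2 /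
          ∫ p : X × Fin Q, (g p.1 p.2 - 1 / 2) ^ 2 ∂D := by
  set M : X × Fin Q → ℝ := fun p => g p.1 p.2 - 1 / 2 with hMdef
  -- measurable modification
  have hsm := hM.1
  set M' : X × Fin Q → ℝ := hsm.mk M with hM'def
  have hMeq : M =ᵐ[D] M' := hsm.ae_eq_mk
  have hM'meas : StronglyMeasurable M' := hsm.stronglyMeasurable_mk
  set A : Set (X × Fin Q) := {p | 0 < M' p} with hAdef
  have hA : MeasurableSet A := measurableSet_lt measurable_const hM'meas.measurable
  -- Step 1: error set is contained in {M ≤ 0}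
  have hsub : {p : X × Fin Q | ¬ ∀ c : Fin Q, c ≠ p.2 → g p.1 c < g p.1 p.2}
      ⊆ {p | M p ≤ 0} := by
    intro p hp
    by_contra hle
    simp only [Set.mem_setOf_eq, not_le] at hle
    apply hp
    intro c hc
    have hy : 1 / 2 < g p.1 p.2 := by
      have := hle
      simp only [hMdef, Set.mem_setOf_eq] at this ⊢
      linarith
    have hsum : g p.1 c + g p.1 p.2 ≤ 1 := by
      have h1 := (hsimplex p.1).2
      have h2 : ∑ d ∈ ({c, p.2} : Finset (Fin Q)), g p.1 d ≤ ∑ d, g p.1 d :=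
        Finset.sum_le_sum_of_subset_of_nonneg (Finset.subset_univ _)
          (fun d _ _ => (hsimplex p.1).1 d)
      rwa [Finset.sum_pair hc, h1] at h2
    linarith
  -- Step 2: measure comparison
  have hset : D {p | M p ≤ 0} = D Aᶜ := by
    have h1 : {p : X × Fin Q | M p ≤ 0} =ᵐ[D] ({p | M' p ≤ 0} : Set (X × Fin Q)) := by
      filter_upwards [hMeq] with p hp
      show (M p ≤ 0) = (M' p ≤ 0)
      rw [hp]
    have h2 : ({p : X × Fin Q | M' p ≤ 0} : Set (X × Fin Q)) = Aᶜ := by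
      ext p; simp [hAdef, not_lt]
    rw [measure_congr h1, h2]
  -- integrability facts
  have hMint : Integrable M D := hM.integrable one_le_two
  have hM2int : Integrable (fun p => M p ^ 2) D := hM.integrable_sq
  set G : X × Fin Q → ℝ := fun p => max (M p) 0 with hGdef
  have hGmem : MemLp G 2 D := hM.pos_part
  have hGint : Integrable G D := hGmem.integrable one_le_two
  have hG2int : Integrable (fun p => G p ^ 2) D := hGmem.integrable_sq
  set F : X × Fin Q → ℝ := A.indicator (fun _ => (1 : ℝ)) with hFdef
  have hFmem : MemLp F 2 D := (memLp_const (1 : ℝ)).indicator hA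
  -- Cauchy-Schwarz: ∫ F*G ≤ (∫ F^2)^(1/2) * (∫ G^2)^(1/2)
  have hconj : (2 : ℝ).HolderConjugate 2 := Real.HolderConjugate.two_two
  have hFnn : 0 ≤ᵐ[D] F := Filter.Eventually.of_forall (fun p => Set.indicator_nonneg (fun _ _ => zero_le_one) p)
  have hGnn : 0 ≤ᵐ[D] G := Filter.Eventually.of_forall (fun p => le_max_right _ _)
  have hof : ENNReal.ofReal (2 : ℝ) = 2 := by norm_num
  have hCS := MeasureTheory.integral_mul_le_Lp_mul_Lq_of_nonneg hconj hFnn hGnn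
    (hof ▸ hFmem) (hof ▸ hGmem)
  -- identify the pieces
  have hrpow : ∀ y : ℝ, y ^ (2 : ℝ) = y ^ 2 := by
    intro y
    rw [show (2 : ℝ) = ((2 : ℕ) : ℝ) by norm_num, Real.rpow_natCast]
  have hF2 : ∫ p, F p ^ (2 : ℝ) ∂D = (D A).toReal := by
    have : (fun p => F p ^ (2 : ℝ)) = F := by
      funext p
      by_cases h : p ∈ A <;> simp [hFdef, h, Real.rpow_natCast]
    rw [this, hFdef, integral_indicator_const (1 : ℝ) hA, smul_eq_mul, mul_one, measureReal_def]
  have hFG : ∫ p, F p * G p ∂D = ∫ p, G p ∂D := by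
    refine integral_congr_ae ?_
    filter_upwards [hMeq] with p hp
    by_cases h : p ∈ A
    · simp [hFdef, h]
    · have hle : M p ≤ 0 := by
        have : ¬ 0 < M' p := h
        rw [hp]; linarith [not_lt.mp this]
      simp [hFdef, hGdef, h, max_eq_right hle]
  have hG2le : ∫ p, G p ^ (2 : ℝ) ∂D ≤ ∫ p, M p ^ 2 ∂D := by
    have heq : (fun p => G p ^ (2 : ℝ)) = fun p => G p ^ 2 := funext fun p => hrpow _
    rw [heq]
    refine integral_mono hG2int hM2int (fun p => ?_)
    rcases le_or_gt (M p) 0 with h | h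
    · simp [hGdef, max_eq_right h, sq_nonneg]
    · simp [hGdef, max_eq_left h.le]
  have hIM_le : ∫ p, M p ∂D ≤ ∫ p, G p ∂D :=
    integral_mono hMint hGint (fun p => le_max_left _ _)
  -- nonnegativity of integrals
  have hG2nn : 0 ≤ ∫ p, G p ^ (2 : ℝ) ∂D :=
    integral_nonneg fun p => Real.rpow_nonneg (le_max_right _ _) _
  have hDAnn : (0 : ℝ) ≤ (D A).toReal := ENNReal.toReal_nonneg
  -- key inequality: (∫ M)^2 ≤ D(A) * ∫ M^2
  have key : (∫ p, M p ∂D) ^ 2 ≤ (D A).toReal * ∫ p, M p ^ 2 ∂D := by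
    have h1 : (∫ p, M p ∂D) ^ 2 ≤ (∫ p, F p * G p ∂D) ^ 2 := by
      rw [hFG]
      exact pow_le_pow_left₀ hpos.le hIM_le 2
    have h2 : (∫ p, F p * G p ∂D) ^ 2 ≤
        ((∫ p, F p ^ (2 : ℝ) ∂D) ^ (1 / 2 : ℝ) * (∫ p, G p ^ (2 : ℝ) ∂D) ^ (1 / 2 : ℝ)) ^ 2 := by
      refine pow_le_pow_left₀ ?_ hCS 2
      rw [hFG]
      exact integral_nonneg fun p => le_max_right _ _
    have h3 : ((∫ p, F p ^ (2 : ℝ) ∂D) ^ (1 / 2 : ℝ) * (∫ p, G p ^ (2 : ℝ) ∂D) ^ (1 / 2 : ℝ)) ^ 2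
        = (∫ p, F p ^ (2 : ℝ) ∂D) * (∫ p, G p ^ (2 : ℝ) ∂D) := by
      rw [mul_pow, ← hrpow ((∫ p, F p ^ (2:ℝ) ∂D) ^ (1/2:ℝ)), ← hrpow ((∫ p, G p ^ (2:ℝ) ∂D) ^ (1/2:ℝ)),
        ← Real.rpow_mul (hF2 ▸ hDAnn), ← Real.rpow_mul hG2nn]
      norm_num
    calc (∫ p, M p ∂D) ^ 2 ≤ _ := h1
      _ ≤ _ := h2
      _ = _ := h3
      _ ≤ (D A).toReal * ∫ p, M p ^ 2 ∂D := by
          rw [hF2]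
          exact mul_le_mul_of_nonneg_left hG2le hDAnn
  -- ∫ M^2 > 0
  have hM2pos : 0 < ∫ p, M p ^ 2 ∂D := by
    by_contra h
    push_neg at h
    have h1 : (D A).toReal * ∫ p, M p ^ 2 ∂D ≤ 0 := mul_nonpos_of_nonneg_of_nonpos hDAnn h
    nlinarith [key, hpos]
  -- conclude
  have hfrac : (∫ p, M p ∂D) ^ 2 / ∫ p, M p ^ 2 ∂D ≤ (D A).toReal :=
    (div_le_iff₀ hM2pos).mpr key
  have hDcomp : (D Aᶜ).toReal = 1 - (D A).toReal := by
    rw [prob_compl_eq_one_sub hA]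
    rw [ENNReal.toReal_sub_of_le prob_le_one ENNReal.one_ne_top, ENNReal.toReal_one]
  have hmono : (D {p : X × Fin Q | ¬ ∀ c : Fin Q, c ≠ p.2 → g p.1 c < g p.1 p.2}).toReal
      ≤ (D Aᶜ).toReal := by
    refine ENNReal.toReal_mono (measure_ne_top D _) ?_
    rw [← hset]
    exact measure_mono hsub
  calc (D {p : X × Fin Q | ¬ ∀ c : Fin Q, c ≠ p.2 → g p.1 c < g p.1 p.2}).toReal
      ≤ (D Aᶜ).toReal := hmono
    _ = 1 - (D A).toReal := hDcomp
    _ ≤ 1 - (∫ p, M p ∂D) ^ 2 / ∫ p, M p ^ 2 ∂D := by linarith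
end

section
/- (Multilabel (Q−1)/Q-margin bound) Let Q ≥ 2, let Y = {−1/√Q, 1/√Q}^Q ⊂ ℝ^Q (so each y ∈ Y is a unit vector), and let g ∈ conv(Y). If ⟨g, y⟩ > (Q−1)/Q, then ⟨g, y⟩ > ⟨g, c⟩ for every c ∈ Y with c ≠ y. Consequently, in the multilabel setting, R_D(B_ρ) ≤ P_{(x,y)∼D}(⟨E_{h∼ρ}h(x), Y(y)⟩ − (Q−1)/Q ≤ 0). -/
open MeasureTheory

/-- Multilabel (Q−1)/Q-margin bound. -/
theorem multilabel_margin_bound {X : Type*} [MeasurableSpace X] {Q : ℕ} (hQ : 2 ≤ Q)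
    (V : Set (Fin Q → ℝ))
    (hV : V = {v | ∀ j, v j = 1 / Real.sqrt Q ∨ v j = -(1 / Real.sqrt Q)})
    (g : X → Fin Q → ℝ) (hg : ∀ x, g x ∈ convexHull ℝ V)
    (D : Measure (X × (Fin Q → ℝ))) [IsProbabilityMeasure D]
    (hlab : ∀ᵐ p ∂D, p.2 ∈ V) :
    (∀ w ∈ convexHull ℝ V, ∀ y ∈ V, ((Q : ℝ) - 1) / Q < (∑ j, w j * y j) →
        ∀ c ∈ V, c ≠ y → (∑ j, w j * c j) < ∑ j, w j * y j) ∧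
    D {p : X × (Fin Q → ℝ) |
        ¬ ∀ c ∈ V, c ≠ p.2 → (∑ j, g p.1 j * c j) < ∑ j, g p.1 j * p.2 j} ≤
      D {p : X × (Fin Q → ℝ) | (∑ j, g p.1 j * p.2 j) - ((Q : ℝ) - 1) / Q ≤ 0} := by
  have hQR : (0 : ℝ) < Q := by
    have : (2 : ℝ) ≤ Q := by exact_mod_cast hQ
    linarith
  have hs : (0 : ℝ) < Real.sqrt Q := Real.sqrt_pos.2 hQR
  set r : ℝ := 1 / Real.sqrt Q with hr
  have hr0 : 0 < r := by positivity
  have hrr : r * r = 1 / Q := by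
    rw [hr, div_mul_div_comm, one_mul, Real.mul_self_sqrt hQR.le]
  have hbound : ∀ w ∈ convexHull ℝ V, ∀ j, |w j| ≤ r := by
    intro w hw j
    have hsub : convexHull ℝ V ⊆ Set.univ.pi (fun _ : Fin Q => Set.Icc (-r) r) := by
      apply convexHull_min
      · intro v hv i _
        rw [hV] at hv
        rcases hv i with h | h <;> rw [h] <;>
          constructor <;> simp [hr]
      · exact convex_pi (fun i _ => convex_Icc _ _)
    have h := hsub hw j (Set.mem_univ j)
    exact abs_le.2 ⟨h.1, h.2⟩
  have main : ∀ w ∈ convexHull ℝ V, ∀ y ∈ V, ((Q : ℝ) - 1) / Q < (∑ j, w j * y j) →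
        ∀ c ∈ V, c ≠ y → (∑ j, w j * c j) < ∑ j, w j * y j := by
    intro w hw y hy hmargin c hc hcy
    rw [hV] at hy hc
    set S : Finset (Fin Q) := Finset.univ.filter (fun j => c j ≠ y j) with hS
    have hSne : S.Nonempty := by
      by_contra h
      rw [Finset.not_nonempty_iff_eq_empty] at h
      apply hcy
      funext j
      by_contra hj
      have : j ∈ S := by simp [hS, hj]
      simp [h] at this
    have hterm : ∀ j, w j * y j ≤ 1 / Q := by
      intro j
      have h1 : |y j| = r := by rcases hy j with h | h <;> rw [h] <;> simp [abs_of_pos hr0, hr0.le]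
      calc w j * y j ≤ |w j * y j| := le_abs_self _
        _ = |w j| * |y j| := abs_mul _ _
        _ ≤ r * r := by rw [h1]; exact mul_le_mul_of_nonneg_right (hbound w hw j) hr0.le
        _ = 1 / Q := hrr
    -- sum over complement of S
    have hcard : (Sᶜ.card : ℝ) ≤ (Q : ℝ) - 1 := by
      have h1 : 1 ≤ S.card := Finset.Nonempty.card_pos hSne
      have h2 : Sᶜ.card = Q - S.card := by
        rw [Finset.card_compl, Fintype.card_fin]
      have : Sᶜ.card ≤ Q - 1 := by omega
      have hQ1 : 1 ≤ Q := by omega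
      calc (Sᶜ.card : ℝ) ≤ ((Q - 1 : ℕ) : ℝ) := by exact_mod_cast this
        _ = (Q : ℝ) - 1 := by push_cast [hQ1]; ring
    have hcompl : ∑ j ∈ Sᶜ, w j * y j ≤ ((Q : ℝ) - 1) / Q := by
      calc ∑ j ∈ Sᶜ, w j * y j ≤ ∑ j ∈ Sᶜ, (1 / Q : ℝ) :=
            Finset.sum_le_sum (fun j _ => hterm j)
        _ = Sᶜ.card * (1 / Q) := by rw [Finset.sum_const, nsmul_eq_mul]
        _ ≤ ((Q : ℝ) - 1) * (1 / Q) := by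
            apply mul_le_mul_of_nonneg_right hcard (by positivity)
        _ = ((Q : ℝ) - 1) / Q := by ring
    have hsplit : ∑ j, w j * y j = ∑ j ∈ S, w j * y j + ∑ j ∈ Sᶜ, w j * y j := by
      rw [Finset.sum_add_sum_compl]
    have hSpos : 0 < ∑ j ∈ S, w j * y j := by
      have := hmargin
      rw [hsplit] at this
      linarith
    have hneg : ∀ j ∈ S, c j = -y j := by
      intro j hj
      have hjne : c j ≠ y j := by simpa [hS] using hj
      rcases hc j with h1 | h1 <;> rcases hy j with h2 | h2 <;>
        simp_all
    have hdiff : ∑ j, w j * y j - ∑ j, w j * c j = 2 * ∑ j ∈ S, w j * y j := by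
      rw [← Finset.sum_sub_distrib, Finset.mul_sum]
      rw [← Finset.sum_subset (Finset.subset_univ S)]
      · apply Finset.sum_congr rfl
        intro j hj
        rw [hneg j hj]; ring
      · intro j _ hj
        have : c j = y j := by
          by_contra h
          exact hj (by simp [hS, h])
        rw [this]; ring
    linarith [hdiff, hSpos]
  refine ⟨main, ?_⟩
  apply measure_mono_ae
  filter_upwards [hlab] with p hp hnp
  show _ - _ ≤ (0:ℝ)
  by_contra hpos
  push_neg at hpos
  exact hnp (main _ (hg p.1) _ hp (by linarith))
end

section
/- (Multilabel ω-margin C-bound) In the multilabel setting with ω = (Q−1)/Q, define M_{ρ,ω}(x,y) = ⟨E_{h∼ρ}h(x), Y(y)⟩ − (Q−1)/Q. If E_{(x,y)∼D}[M_{ρ,ω}(x,y)] > 0, then R_D(B_ρ) ≤ 1 − (E_{(x,y)∼D}[M_{ρ,ω}(x,y)])² / E_{(x,y)∼D}[(M_{ρ,ω}(x,y))²]. -/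
open MeasureTheory

lemma cantelli {α : Type*} [MeasurableSpace α] (μ : Measure α) [IsProbabilityMeasure μ]
    (M : α → ℝ) (hM : MemLp M 2 μ) (hI : 0 < ∫ x, M x ∂μ) :
    (μ {x | M x ≤ 0}).toReal ≤ 1 - (∫ x, M x ∂μ) ^ 2 / ∫ x, M x ^ 2 ∂μ := by
  set I := ∫ x, M x ∂μ with hIdef
  have hsm := hM.aestronglyMeasurable
  set M' := hsm.mk M with hM'def
  have hMeq : M =ᵐ[μ] M' := hsm.ae_eq_mk
  have hM'meas : Measurable M' := hsm.stronglyMeasurable_mk.measurable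
  have hA : MeasurableSet {x | 0 < M' x} := measurableSet_lt measurable_const hM'meas
  set q := (μ {x | 0 < M' x}).toReal with hqdef
  have hq1 : q ≤ 1 := by
    rw [hqdef]
    exact ENNReal.toReal_le_of_le_ofReal one_pos.le (by simpa using prob_le_one)
  -- q > 0
  have hqpos : 0 < q := by
    by_contra h
    push_neg at h
    have hq0 : μ {x | 0 < M' x} = 0 := by
      have := ENNReal.toReal_nonneg (a := μ {x | 0 < M' x})
      have hfin : μ {x | 0 < M' x} ≠ ⊤ := measure_ne_top _ _
      have : q = 0 := le_antisymm h this
      rwa [hqdef, ENNReal.toReal_eq_zero_iff, or_iff_left hfin] at this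
    have hle : ∀ᵐ x ∂μ, M x ≤ 0 := by
      have hc : ∀ᵐ x ∂μ, ¬ (0 < M' x) := by
        rw [ae_iff]; simpa using hq0
      filter_upwards [hc, hMeq] with x hx hx2
      rw [hx2]; linarith [not_lt.mp hx]
    have : I ≤ 0 := integral_nonpos_of_ae hle
    linarith
  have hint : Integrable M μ := hM.integrable one_le_two
  have hsq : Integrable (fun x => M x ^ 2) μ := hM.integrable_sq
  set S := ∫ x, M x ^ 2 ∂μ with hSdef
  set c := I / q with hcdef
  have hcpos : 0 < c := div_pos hI hqpos
  -- pointwise bound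
  have hpt : ∀ᵐ x ∂μ, M x ≤ M x ^ 2 / (2 * c) + Set.indicator {x | 0 < M' x} (fun _ => c / 2) x := by
    filter_upwards [hMeq] with x hx
    by_cases h : 0 < M' x
    · rw [Set.indicator_of_mem (show x ∈ {x | 0 < M' x} from h)]
      have h2 : 0 ≤ (M x - c) ^ 2 := sq_nonneg _
      have : 0 ≤ (M x - c) ^ 2 / (2 * c) := div_nonneg h2 (by linarith)
      have hexp : (M x - c) ^ 2 / (2 * c) = M x ^ 2 / (2 * c) + c / 2 - M x := by
        field_simp; ring
      linarith [hexp ▸ this]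
    · rw [Set.indicator_of_notMem (show x ∉ {x | 0 < M' x} from h)]
      have : M x ≤ 0 := by rw [hx]; linarith [not_lt.mp h]
      have h2 : 0 ≤ M x ^ 2 / (2 * c) := div_nonneg (sq_nonneg _) (by linarith)
      linarith
  have hintR : Integrable (fun x => M x ^ 2 / (2 * c) + Set.indicator {x | 0 < M' x} (fun _ => c / 2) x) μ :=
    (hsq.div_const _).add ((integrable_const (c / 2)).indicator hA)
  have hIle : I ≤ S / (2 * c) + c / 2 * q := by
    have := integral_mono_ae hint hintR hpt
    rw [integral_add (hsq.div_const _) ((integrable_const (c / 2)).indicator hA),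
      integral_div, integral_indicator_const _ hA] at this
    simpa [smul_eq_mul, mul_comm, S, q, Measure.real_def] using this
  -- I^2 ≤ S * q
  have hkey : I ^ 2 ≤ S * q := by
    rw [hcdef] at hIle
    have e : S / (2 * (I / q)) + I / q / 2 * q = S * q / (2 * I) + I / 2 := by
      field_simp
    rw [e] at hIle
    have h2 : I / 2 ≤ S * q / (2 * I) := by linarith
    rw [div_le_div_iff₀ two_pos (by linarith : (0:ℝ) < 2 * I)] at h2
    nlinarith
  have hSpos : 0 < S := by nlinarith
  have hq' : I ^ 2 / S ≤ q := by
    rw [div_le_iff₀ hSpos]; linarith [hkey, mul_comm S q]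
  -- complement
  have hcompl : (μ {x | M' x ≤ 0}).toReal = 1 - q := by
    have : {x | M' x ≤ 0} = {x | 0 < M' x}ᶜ := by ext x; simp
    rw [this, measure_compl hA (measure_ne_top _ _), measure_univ,
      ENNReal.toReal_sub_of_le (by simpa using prob_le_one) (by simp)]
    simp [q]
  have hmeq : μ {x | M x ≤ 0} = μ {x | M' x ≤ 0} := by
    apply measure_congr
    rw [Filter.eventuallyEq_set]
    filter_upwards [hMeq] with x hx
    simp [Set.mem_setOf_eq, hx]
  rw [hmeq, hcompl]
  linarith

lemma margin_implies_win {Q : ℕ} (hQ : 2 ≤ Q) (V : Set (Fin Q → ℝ))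
    (hV : V = {v | ∀ j, v j = 1 / Real.sqrt Q ∨ v j = -(1 / Real.sqrt Q)})
    (w : Fin Q → ℝ) (hw : w ∈ convexHull ℝ V) (y : Fin Q → ℝ) (hy : y ∈ V)
    (hmargin : ((Q : ℝ) - 1) / Q < ∑ j, w j * y j) :
    ∀ c ∈ V, c ≠ y → (∑ j, w j * c j) < ∑ j, w j * y j := by
  have hQ0 : (0 : ℝ) < Q := by positivity
  set s : ℝ := 1 / Real.sqrt Q with hsdef
  have hspos : 0 < s := by
    have : 0 < Real.sqrt Q := Real.sqrt_pos.mpr hQ0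
    positivity
  have hs2 : s * s = 1 / Q := by
    rw [hsdef, div_mul_div_comm, Real.mul_self_sqrt hQ0.le, one_mul]
  -- coordinates of w are bounded by s
  have hwbox : ∀ j, w j ∈ Set.Icc (-s) s := by
    have hsub : V ⊆ Set.univ.pi fun _ : Fin Q => Set.Icc (-s) s := by
      intro v hv j _
      rw [hV] at hv
      rcases hv j with h | h <;> rw [h] <;> constructor <;> linarith
    have hconv : Convex ℝ (Set.univ.pi fun _ : Fin Q => Set.Icc (-s) s) :=
      convex_pi fun _ _ => convex_Icc _ _
    have := convexHull_min hsub hconv hw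
    intro j; exact this j (Set.mem_univ j)
  have habs : ∀ j, |w j| ≤ s := fun j => abs_le.mpr ⟨(hwbox j).1, (hwbox j).2⟩
  have hybnd : ∀ j, |y j| = s := by
    intro j
    rw [hV] at hy
    rcases hy j with h | h <;> rw [h] <;> simp [abs_of_pos hspos, abs_of_neg, hspos, le_of_lt]
  -- each term w j * y j is bounded by 1/Q
  have hub : ∀ j, w j * y j ≤ 1 / Q := by
    intro j
    calc w j * y j ≤ |w j * y j| := le_abs_self _
      _ = |w j| * |y j| := abs_mul _ _
      _ ≤ s * s := by rw [hybnd j]; exact mul_le_mul_of_nonneg_right (habs j) hspos.le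
      _ = 1 / Q := hs2
  -- each term is positive
  have hterm : ∀ j, 0 < w j * y j := by
    intro j
    have hsum : ∑ k ∈ Finset.univ.erase j, w k * y k ≤ ((Q : ℝ) - 1) / Q := by
      calc ∑ k ∈ Finset.univ.erase j, w k * y k
          ≤ (Finset.univ.erase j).card • (1 / (Q : ℝ)) :=
            Finset.sum_le_card_nsmul _ _ _ fun k _ => hub k
        _ = ((Q : ℝ) - 1) / Q := by
            rw [Finset.card_erase_of_mem (Finset.mem_univ j), Finset.card_univ, Fintype.card_fin,
              nsmul_eq_mul, Nat.cast_sub (by omega), Nat.cast_one]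
            ring
    have h0 := Finset.add_sum_erase Finset.univ (fun k => w k * y k) (Finset.mem_univ j)
    beta_reduce at h0
    linarith
  intro c hc hcy
  rw [hV] at hy hc
  have hdiff : ∀ j, 0 ≤ w j * y j - w j * c j := by
    intro j
    have ht := hterm j
    rcases hy j with h1 | h1 <;> rcases hc j with h2 | h2 <;>
      rw [h1] at ht ⊢ <;> rw [h2] <;> linarith
  obtain ⟨j0, hj0⟩ := Function.ne_iff.mp hcy
  have hdiff0 : 0 < w j0 * y j0 - w j0 * c j0 := by
    have ht := hterm j0
    rcases hy j0 with h1 | h1 <;> rcases hc j0 with h2 | h2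
    · exact absurd (h2.trans h1.symm) hj0
    · rw [h1] at ht ⊢; rw [h2]; linarith
    · rw [h1] at ht ⊢; rw [h2]; linarith
    · exact absurd (h2.trans h1.symm) hj0
  have hsumpos : 0 < ∑ j, (w j * y j - w j * c j) :=
    Finset.sum_pos' (fun j _ => hdiff j) ⟨j0, Finset.mem_univ j0, hdiff0⟩
  rw [Finset.sum_sub_distrib] at hsumpos
  linarith


/-- Multilabel ω-margin C-bound with ω = (Q−1)/Q. -/
theorem multilabel_c_bound {X : Type*} [MeasurableSpace X] {Q : ℕ} (hQ : 2 ≤ Q)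
    (V : Set (Fin Q → ℝ))
    (hV : V = {v | ∀ j, v j = 1 / Real.sqrt Q ∨ v j = -(1 / Real.sqrt Q)})
    (g : X → Fin Q → ℝ) (hg : ∀ x, g x ∈ convexHull ℝ V)
    (D : Measure (X × (Fin Q → ℝ))) [IsProbabilityMeasure D]
    (hlab : ∀ᵐ p ∂D, p.2 ∈ V)
    (hM : MemLp (fun p : X × (Fin Q → ℝ) =>
        (∑ j, g p.1 j * p.2 j) - ((Q : ℝ) - 1) / Q) 2 D)
    (hpos : 0 < ∫ p : X × (Fin Q → ℝ),
        ((∑ j, g p.1 j * p.2 j) - ((Q : ℝ) - 1) / Q) ∂D) :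
    (D {p : X × (Fin Q → ℝ) |
        ¬ ∀ c ∈ V, c ≠ p.2 → (∑ j, g p.1 j * c j) < ∑ j, g p.1 j * p.2 j}).toReal ≤
      1 - (∫ p : X × (Fin Q → ℝ),
              ((∑ j, g p.1 j * p.2 j) - ((Q : ℝ) - 1) / Q) ∂D) ^ 2 /
          ∫ p : X × (Fin Q → ℝ),
              ((∑ j, g p.1 j * p.2 j) - ((Q : ℝ) - 1) / Q) ^ 2 ∂D := by
  set M := fun p : X × (Fin Q → ℝ) => (∑ j, g p.1 j * p.2 j) - ((Q : ℝ) - 1) / Q with hMdef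
  have hcant := cantelli D M hM hpos
  refine le_trans ?_ hcant
  apply ENNReal.toReal_mono (measure_ne_top _ _)
  apply measure_mono_ae
  rw [ae_le_set]
  refine measure_mono_null (fun p hp => ?_) (ae_iff.mp hlab)
  obtain ⟨hpE, hnot⟩ := hp
  simp only [Set.mem_setOf_eq] at hpE hnot ⊢
  intro hpV
  have h : 0 < M p := lt_of_not_ge hnot
  have hmargin : ((Q : ℝ) - 1) / Q < ∑ j, g p.1 j * p.2 j := by
    have : 0 < M p := h
    rw [hMdef] at this
    linarith [this]
  exact hpE (margin_implies_win hQ V hV (g p.1) (hg p.1) p.2 hpV hmargin)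
end
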